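/- For every complex λ with Re λ > 0 and every δ ∈ [0, π/2), there exists a constant C > 0 such that for all complex z with |Im z| ≤ δ one has |cosh(z)^{−λ}| ≤ C·exp(−(Re λ)·|Re z|), where cosh(z)^{−λ} = exp(−λ·Log(cosh z)) with the principal logarithm. -/

import Mathlib

open Real Complex

lemma normSq_cosh_eq (z : ℂ) :
    Complex.normSq (Complex.cosh z) = Real.sinh z.re ^ 2 + Real.cos z.im ^ 2 := by
  conv_lhs => rw [← Complex.re_add_im z, Complex.cosh_add, Complex.cosh_mul_I,
    Complex.sinh_mul_I, ← Complex.ofReal_cosh, ← Complex.ofReal_sinh, ← Complex.ofReal_cos,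
    ← Complex.ofReal_sin]
  rw [Complex.normSq_apply]
  simp only [Complex.add_re, Complex.add_im, Complex.mul_re, Complex.mul_im, Complex.I_re,
    Complex.I_im, Complex.ofReal_re, Complex.ofReal_im]
  ring_nf
  have h1 := Real.sin_sq_add_cos_sq z.im
  have h2 := Real.cosh_sq z.re
  nlinarith [h1, h2]

lemma cosh_lower (δ : ℝ) (hδ0 : 0 ≤ δ) (hδ : δ < Real.pi / 2) (z : ℂ) (h : |z.im| ≤ δ) :
    min (3/8) (Real.cos δ / 2) * Real.exp |z.re| ≤ ‖Complex.cosh z‖ := by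
  have hpi := Real.pi_pos
  have hcosδ : 0 < Real.cos δ := Real.cos_pos_of_mem_Ioo ⟨by linarith, hδ⟩
  set c := min (3/8 : ℝ) (Real.cos δ / 2) with hc
  have hc0 : 0 < c := lt_min (by norm_num) (by linarith)
  have hc1 : c ≤ 3/8 := min_le_left _ _
  have hc2 : c ≤ Real.cos δ / 2 := min_le_right _ _
  have hcosy : Real.cos δ ≤ Real.cos z.im := by
    rw [← Real.cos_abs z.im]
    exact Real.cos_le_cos_of_nonneg_of_le_pi (abs_nonneg _) (by linarith) h
  set t := Real.exp |z.re| with ht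
  have ht1 : 1 ≤ t := Real.one_le_exp (abs_nonneg _)
  have ht0 : 0 < t := by linarith
  have key : (c * t) ^ 2 ≤ Real.sinh z.re ^ 2 + Real.cos z.im ^ 2 := by
    rcases le_or_gt t 2 with h2 | h2
    · have hstep : c * t ≤ Real.cos z.im := by nlinarith
      have := pow_le_pow_left₀ (by positivity) hstep 2
      nlinarith [sq_nonneg (Real.sinh z.re)]
    · have hsinheq : Real.sinh z.re ^ 2 = Real.sinh |z.re| ^ 2 := by
        rcases abs_cases z.re with ⟨he, _⟩ | ⟨he, _⟩ <;> rw [he] <;> simp [Real.sinh_neg]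
      have hsinh : 3 * t / 8 ≤ Real.sinh |z.re| := by
        rw [Real.sinh_eq]
        have hinv : Real.exp (-|z.re|) = 1 / t := by rw [Real.exp_neg, one_div]
        rw [hinv, show Real.exp |z.re| = t from rfl]
        have h12 : 1 / t ≤ 1 / 2 := one_div_le_one_div_of_le (by norm_num) h2.le
        linarith
      have hsq : (3 * t / 8) ^ 2 ≤ Real.sinh |z.re| ^ 2 :=
        pow_le_pow_left₀ (by positivity) hsinh 2
      have hct3 : c * t ≤ 3 * t / 8 := by nlinarith
      nlinarith [sq_nonneg (Real.cos z.im), mul_pos hc0 ht0]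
  calc c * t = Real.sqrt ((c * t) ^ 2) := (Real.sqrt_sq (by positivity)).symm
    _ ≤ Real.sqrt (Real.sinh z.re ^ 2 + Real.cos z.im ^ 2) := Real.sqrt_le_sqrt key
    _ = ‖Complex.cosh z‖ := by
        rw [Complex.norm_def, normSq_cosh_eq]

theorem cosh_cpow_neg_bound (lam : ℂ) (hlam : 0 < lam.re) (δ : ℝ) (hδ0 : 0 ≤ δ)
    (hδ : δ < Real.pi / 2) :
    ∃ C : ℝ, 0 < C ∧ ∀ z : ℂ, |z.im| ≤ δ →
      ‖(Complex.cosh z) ^ (-lam)‖ ≤ C * Real.exp (-lam.re * |z.re|) := by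
  have hpi := Real.pi_pos
  have hcosδ : 0 < Real.cos δ := Real.cos_pos_of_mem_Ioo ⟨by linarith, hδ⟩
  set c := min (3/8 : ℝ) (Real.cos δ / 2) with hc
  have hc0 : 0 < c := lt_min (by norm_num) (by linarith)
  refine ⟨Real.exp (Real.pi * |lam.im|) * c ^ (-lam.re), by positivity, fun z hz => ?_⟩
  have hlow := cosh_lower δ hδ0 hδ z hz
  have hct : 0 < c * Real.exp |z.re| := by positivity
  have habs : 0 < ‖Complex.cosh z‖ := lt_of_lt_of_le hct hlow
  have hne : Complex.cosh z ≠ 0 := by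
    intro h0; rw [h0] at habs; simp at habs
  rw [Complex.norm_cpow_of_ne_zero hne]
  have hexp : Real.exp ((Complex.cosh z).arg * (-lam).im) ≥ Real.exp (-(Real.pi * |lam.im|)) := by
    apply Real.exp_le_exp.2
    have h1 : |(Complex.cosh z).arg * (-lam).im| ≤ Real.pi * |lam.im| := by
      rw [abs_mul, Complex.neg_im, abs_neg]
      exact mul_le_mul_of_nonneg_right (Complex.abs_arg_le_pi _) (abs_nonneg _)
    linarith [neg_abs_le ((Complex.cosh z).arg * (-lam).im)]
  have hbase : ‖Complex.cosh z‖ ^ (-lam).re ≤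
      (c * Real.exp |z.re|) ^ (-lam).re := by
    apply Real.rpow_le_rpow_of_nonpos hct hlow
    simp [le_of_lt hlam]
  have hsplit : (c * Real.exp |z.re|) ^ (-lam).re
      = c ^ (-lam.re) * Real.exp (-lam.re * |z.re|) := by
    rw [Real.mul_rpow (le_of_lt hc0) (Real.exp_pos _).le]
    rw [Real.rpow_def_of_pos (Real.exp_pos _), Real.log_exp]
    simp [mul_comm]
  calc ‖Complex.cosh z‖ ^ (-lam).re / Real.exp ((Complex.cosh z).arg * (-lam).im)
      ≤ (c * Real.exp |z.re|) ^ (-lam).re / Real.exp (-(Real.pi * |lam.im|)) :=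
        div_le_div₀ (Real.rpow_nonneg hct.le _) hbase (Real.exp_pos _) hexp
    _ = Real.exp (Real.pi * |lam.im|) * c ^ (-lam.re) * Real.exp (-lam.re * |z.re|) := by
        rw [hsplit, Real.exp_neg, div_eq_mul_inv, inv_inv]
        ring
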